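/- Let U ⊆ ℂ be open and let g : ℂ × ℂ → ℂ be holomorphic (differentiable over ℂ) on U × ℍ, where ℍ = {z : ℂ | 0 < Im z}. Suppose there are constants C > 0 and A, B ≥ 0 such that ‖g(w, x + i·y)‖ ≤ C·(1 + |x|)^B · y^{−A} for all w ∈ U, all x ∈ ℝ and all y ∈ (0,1]. Then for every Schwartz function f : ℝ → ℂ there exists a function h : ℂ → ℂ, holomorphic on U, such that for every w ∈ U the pairing ∫_ℝ g(w, x + i·ε)·f(x) dx tends to h(w) as ε → 0⁺. That is, the distributional boundary value depends holomorphically on the parameter w. -/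

import Mathlib

open MeasureTheory Filter Set Metric

lemma vlad_rpow_anti {x y c : ℝ} (hx : 0 < x) (hxy : x ≤ y) (hc : c ≤ 0) :
    y ^ c ≤ x ^ c := by
  have hy : (0:ℝ) < y := lt_of_lt_of_le hx hxy
  rw [show c = -(-c) by ring, Real.rpow_neg hx.le, Real.rpow_neg hy.le]
  have h1 : x ^ (-c) ≤ y ^ (-c) := Real.rpow_le_rpow hx.le hxy (by linarith)
  have h2 : (0:ℝ) < x ^ (-c) := Real.rpow_pos_of_pos hx _
  exact inv_anti₀ h2 h1

/-- FTC step: from the derivative chain, express `φ k` via an interval integral. -/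
lemma vlad_ftc {φ ψ : ℝ → ℂ} {a ε : ℝ} (hε : 0 < ε) (hεa : ε ≤ a)
    (hderiv : ∀ t ∈ Set.Ioc (0:ℝ) a, HasDerivAt φ (-Complex.I * ψ t) t)
    (hcont : ContinuousOn ψ (Set.Ioc (0:ℝ) a)) :
    φ ε = φ a + Complex.I * ∫ t in ε..a, ψ t := by
  have hsub : Set.uIcc ε a ⊆ Set.Ioc (0:ℝ) a := by
    rw [Set.uIcc_of_le hεa]
    exact fun t ht => ⟨lt_of_lt_of_le hε ht.1, ht.2⟩
  have hint : IntervalIntegrable ψ volume ε a :=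
    (hcont.mono hsub).intervalIntegrable
  have hftc : ∫ t in ε..a, (-Complex.I * ψ t) = φ a - φ ε :=
    intervalIntegral.integral_eq_sub_of_hasDerivAt
      (fun t ht => hderiv t (hsub ht)) (hint.const_mul _)
  rw [intervalIntegral.integral_const_mul] at hftc
  have : φ a - φ ε = -Complex.I * ∫ t in ε..a, ψ t := hftc.symm
  have h2 : φ ε = φ a - (-Complex.I * ∫ t in ε..a, ψ t) := by
    rw [← this]; ring
  rw [h2]; ring

/-- One–dimensional key lemma. -/
lemma vlad_oned (n : ℕ) : ∀ (α a M : ℝ), (n : ℝ) < α → α < (n : ℝ) + 1 → 0 < a → a ≤ 1 →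
    0 ≤ M → ∀ (φ : ℕ → ℂ → ℝ → ℂ) (S : Set ℂ),
    (∀ w ∈ S, ∀ k, ∀ ε ∈ Set.Ioc (0:ℝ) a, HasDerivAt (φ k w) (-Complex.I * φ (k+1) w ε) ε) →
    (∀ w ∈ S, ∀ k ≤ n, ‖φ k w a‖ ≤ M) →
    (∀ w ∈ S, ∀ ε ∈ Set.Ioc (0:ℝ) a, ‖φ (n+1) w ε‖ ≤ M * ε ^ (-α)) →
    ∃ (L : ℂ → ℂ) (ψ : ℝ → ℝ), Tendsto ψ (nhdsWithin 0 (Set.Ioi 0)) (nhds 0) ∧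
      ∀ w ∈ S, ∀ ε ∈ Set.Ioc (0:ℝ) a, ‖φ 0 w ε - L w‖ ≤ ψ ε := by
  induction n with
  | zero =>
    intro α a M hα0 hα1 ha ha1 hM φ S hderiv hbase htop
    push_cast at hα0 hα1
    have hcont : ∀ w ∈ S, ContinuousOn (fun t => φ 1 w t) (Set.Ioc (0:ℝ) a) := fun w hw t ht =>
      ((hderiv w hw 1 t ht).continuousAt).continuousWithinAt
    -- integrability of φ 1 on (0, a]
    have hrpow_int : IntegrableOn (fun t : ℝ => M * t ^ (-α)) (Set.Ioc (0:ℝ) a) := by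
      have : IntervalIntegrable (fun t : ℝ => t ^ (-α)) volume 0 a :=
        intervalIntegral.intervalIntegrable_rpow' (by linarith)
      exact ((intervalIntegrable_iff_integrableOn_Ioc_of_le ha.le).1 this).const_mul M
    have hint : ∀ w ∈ S, IntegrableOn (fun t => φ 1 w t) (Set.Ioc (0:ℝ) a) := by
      intro w hw
      refine hrpow_int.mono' ((hcont w hw).aestronglyMeasurable measurableSet_Ioc) ?_
      exact (ae_restrict_iff' measurableSet_Ioc).2 (Eventually.of_forall fun t ht => htop w hw t ht)
    refine ⟨fun w => φ 0 w a + Complex.I * ∫ t in (0:ℝ)..a, φ 1 w t,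
      fun ε => M * ε ^ (1 - α) / (1 - α), ?_, ?_⟩
    · have h0 : Tendsto (fun ε : ℝ => ε ^ (1 - α)) (nhds 0) (nhds ((0:ℝ) ^ (1 - α))) :=
        (Real.continuousAt_rpow_const 0 (1 - α) (Or.inr (by linarith))).tendsto
      rw [Real.zero_rpow (by linarith)] at h0
      have := (h0.const_mul M).div_const (1 - α)
      simpa using this.mono_left nhdsWithin_le_nhds
    · intro w hw ε hε
      have heq := vlad_ftc hε.1 hε.2 (hderiv w hw 0) (hcont w hw)
      have hii : ∀ b c : ℝ, 0 ≤ b → b ≤ c → c ≤ a →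
          IntervalIntegrable (fun t => φ 1 w t) volume b c := by
        intro b c hb hbc hca
        rw [intervalIntegrable_iff_integrableOn_Ioc_of_le hbc]
        exact (hint w hw).mono_set (Set.Ioc_subset_Ioc hb hca)
      have hadj : (∫ t in (0:ℝ)..ε, φ 1 w t) + ∫ t in ε..a, φ 1 w t
          = ∫ t in (0:ℝ)..a, φ 1 w t :=
        intervalIntegral.integral_add_adjacent_intervals
          (hii 0 ε le_rfl hε.1.le (hε.2.trans le_rfl)) (hii ε a hε.1.le hε.2 le_rfl)
      have hdiff : φ 0 w ε - (φ 0 w a + Complex.I * ∫ t in (0:ℝ)..a, φ 1 w t)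
          = -Complex.I * ∫ t in (0:ℝ)..ε, φ 1 w t := by
        rw [heq, ← hadj]; ring
      rw [hdiff]
      rw [norm_mul]
      simp only [norm_neg, Complex.norm_I, one_mul]
      calc ‖∫ t in (0:ℝ)..ε, φ 1 w t‖
          ≤ |∫ t in (0:ℝ)..ε, M * t ^ (-α)| := by
            refine intervalIntegral.norm_integral_le_abs_of_norm_le ?_
              ((intervalIntegrable_iff_integrableOn_Ioc_of_le hε.1.le).2
                (hrpow_int.mono_set (Set.Ioc_subset_Ioc le_rfl hε.2)))
            rw [Set.uIoc_of_le hε.1.le]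
            exact (ae_restrict_iff' measurableSet_Ioc).2 (Eventually.of_forall fun t ht =>
              htop w hw t ⟨ht.1, ht.2.trans hε.2⟩)
        _ = M * ε ^ (1 - α) / (1 - α) := by
            rw [intervalIntegral.integral_const_mul, integral_rpow (Or.inl (by linarith))]
            rw [Real.zero_rpow (by intro h; linarith), sub_zero]
            have he : -α + 1 = 1 - α := by ring
            rw [he, abs_of_nonneg, mul_div_assoc]
            exact mul_nonneg hM (div_nonneg (Real.rpow_nonneg hε.1.le _) (by linarith))
  | succ n IH =>
    intro α a M hα0 hα1 ha ha1 hM φ S hderiv hbase htop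
    push_cast at hα0 hα1
    have hn0 : (0:ℝ) ≤ (n:ℝ) := Nat.cast_nonneg n
    have hα1' : 1 < α := by linarith
    have hcont : ∀ w ∈ S, ∀ k, ContinuousOn (fun t => φ k w t) (Set.Ioc (0:ℝ) a) :=
      fun w hw k t ht => ((hderiv w hw k t ht).continuousAt).continuousWithinAt
    have key : ∀ w ∈ S, ∀ ε ∈ Set.Ioc (0:ℝ) a,
        ‖φ (n+1) w ε‖ ≤ (M + M / (α - 1)) * ε ^ (-(α-1)) := by
      intro w hw ε hε
      have heq := vlad_ftc hε.1 hε.2 (hderiv w hw (n+1)) (hcont w hw (n+2))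
      have hnorm : ‖∫ t in ε..a, φ (n+1+1) w t‖ ≤ M / (α-1) * ε ^ (1-α) := by
        calc ‖∫ t in ε..a, φ (n+1+1) w t‖
            ≤ |∫ t in ε..a, M * t ^ (-α)| := by
              refine intervalIntegral.norm_integral_le_abs_of_norm_le ?_ ?_
              · rw [Set.uIoc_of_le hε.2]
                exact (ae_restrict_iff' measurableSet_Ioc).2 (Eventually.of_forall fun t ht =>
                  htop w hw t ⟨hε.1.trans ht.1, ht.2⟩)
              · apply ContinuousOn.intervalIntegrable
                intro t ht
                rw [Set.uIcc_of_le hε.2] at ht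
                exact (continuous_const.continuousAt.mul (Real.continuousAt_rpow_const t (-α)
                  (Or.inl (ne_of_gt (lt_of_lt_of_le hε.1 ht.1))))).continuousWithinAt
          _ ≤ M / (α-1) * ε ^ (1-α) := by
              rw [intervalIntegral.integral_const_mul,
                integral_rpow (Or.inr ⟨by intro h; linarith,
                  by rw [Set.uIcc_of_le hε.2]; intro hmem; exact absurd hmem.1 (not_le.2 hε.1)⟩)]
              have he : -α + 1 = 1 - α := by ring
              rw [he]
              have hεle : a ^ (1-α) ≤ ε ^ (1-α) := vlad_rpow_anti hε.1 hε.2 (by linarith)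
              have heq2 : M * ((a ^ (1-α) - ε ^ (1-α)) / (1-α))
                  = M * ((ε ^ (1-α) - a ^ (1-α)) / (α-1)) := by
                rw [mul_eq_mul_left_iff]
                left
                rw [div_eq_div_iff ((by linarith : (1:ℝ)-α < 0).ne) ((by linarith : (0:ℝ) < α-1).ne')]
                ring
              rw [heq2, abs_of_nonneg (mul_nonneg hM (div_nonneg (by linarith) (by linarith)))]
              calc M * ((ε ^ (1-α) - a ^ (1-α)) / (α-1))
                  ≤ M * (ε ^ (1-α) / (α-1)) := by
                    refine mul_le_mul_of_nonneg_left ?_ hM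
                    refine div_le_div_of_nonneg_right ?_ (by linarith)
                    exact sub_le_self _ (Real.rpow_nonneg ha.le _)
                _ = M / (α-1) * ε ^ (1-α) := by ring
      rw [heq]
      calc ‖φ (n+1) w a + Complex.I * ∫ t in ε..a, φ (n+1+1) w t‖
          ≤ ‖φ (n+1) w a‖ + ‖Complex.I * ∫ t in ε..a, φ (n+1+1) w t‖ := norm_add_le _ _
        _ ≤ M + M/(α-1) * ε ^ (1-α) := by
            rw [norm_mul, Complex.norm_I, one_mul]
            exact add_le_add (hbase w hw (n+1) le_rfl) hnorm
        _ ≤ (M + M/(α-1)) * ε ^ (-(α-1)) := by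
            rw [show -(α-1) = 1-α by ring]
            have h1 : (1:ℝ) ≤ ε ^ (1-α) :=
              Real.one_le_rpow_of_pos_of_le_one_of_nonpos hε.1 (hε.2.trans ha1) (by linarith)
            have h3 : (0:ℝ) ≤ M/(α-1) := div_nonneg hM (by linarith)
            nlinarith [mul_nonneg hM (by linarith : (0:ℝ) ≤ ε ^ (1-α) - 1)]
    have hM' : 0 ≤ M + M/(α-1) := add_nonneg hM (div_nonneg hM (by linarith))
    exact IH (α-1) a (M + M/(α-1)) (by linarith) (by linarith) ha ha1 hM' φ S hderiv
      (fun w hw k hk => le_trans (hbase w hw k (hk.trans (Nat.le_succ n)))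
        (le_add_of_nonneg_right (div_nonneg hM (by linarith)))) key


lemma vlad_comp_affine {h : ℂ → ℂ} {h' z₀ : ℂ} {u : ℝ → ℂ} {u' : ℂ} {t : ℝ}
    (hh : HasDerivAt h h' z₀) (hu : HasDerivAt u u' t) (hz : u t = z₀) :
    HasDerivAt (fun s => h (u s)) (u' * h') t := by
  subst hz
  have := (hh.hasFDerivAt.restrictScalars ℝ).comp_hasDerivAt t hu
  simpa [smul_eq_mul, mul_comm, Function.comp_def] using this

lemma vlad_schwartz_bound (h : SchwartzMap ℝ ℂ) (B : ℝ) (hB : 0 ≤ B) :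
    ∃ D : ℝ, 0 ≤ D ∧ ∀ x : ℝ, (1 + |x|) ^ B * ‖h x‖ ≤ D / (1 + x ^ 2) := by
  obtain ⟨C0, hC0⟩ := h.decay 0 0
  set M0 : ℕ := ⌈B⌉₊ with hM0
  set N : ℕ := M0 + 2 with hN
  obtain ⟨CN, hCN⟩ := h.decay N 0
  have hC0' : ∀ x : ℝ, ‖h x‖ ≤ C0 := by
    intro x; have := hC0.2 x; simpa [norm_iteratedFDeriv_zero] using this
  have hCN' : ∀ x : ℝ, |x| ^ N * ‖h x‖ ≤ CN := by
    intro x; have := hCN.2 x; simpa [norm_iteratedFDeriv_zero, Real.norm_eq_abs] using this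
  have hC0nn : 0 ≤ C0 := le_trans (norm_nonneg _) (hC0' 0)
  have hCNnn : 0 ≤ CN := by
    have := hCN' 1; simpa using le_trans (by positivity) this
  refine ⟨2 ^ N * (C0 + CN), by positivity, fun x => ?_⟩
  have hx0 : (0:ℝ) < 1 + x ^ 2 := by positivity
  rw [le_div_iff₀ hx0]
  have hb1 : (1:ℝ) ≤ 1 + |x| := by simp [abs_nonneg]
  have h2 : (1 + |x|) ^ B ≤ (1 + |x|) ^ (M0 : ℕ) := by
    rw [← Real.rpow_natCast (1 + |x|) M0]
    exact Real.rpow_le_rpow_of_exponent_le hb1 (Nat.le_ceil B)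
  have h3 : 1 + x ^ 2 ≤ (1 + |x|) ^ (2:ℕ) := by nlinarith [abs_nonneg x, sq_abs x]
  have hstep : (1 + |x|) ^ B * ‖h x‖ * (1 + x ^ 2) ≤ (1 + |x|) ^ N * ‖h x‖ := by
    calc (1 + |x|) ^ B * ‖h x‖ * (1 + x ^ 2)
        ≤ (1 + |x|) ^ (M0:ℕ) * ‖h x‖ * ((1 + |x|) ^ (2:ℕ)) := by
          gcongr
      _ = (1 + |x|) ^ N * ‖h x‖ := by rw [hN]; ring
  refine hstep.trans ?_
  rcases le_total |x| 1 with hx | hx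
  · have : (1 + |x|) ^ N ≤ 2 ^ N := pow_le_pow_left₀ (by positivity) (by linarith) N
    calc (1 + |x|) ^ N * ‖h x‖ ≤ 2 ^ N * C0 :=
          mul_le_mul this (hC0' x) (norm_nonneg _) (by positivity)
      _ ≤ 2 ^ N * (C0 + CN) := by
          exact mul_le_mul_of_nonneg_left (by linarith) (by positivity)
  · have : (1 + |x|) ^ N ≤ 2 ^ N * |x| ^ N := by
      calc (1 + |x|) ^ N ≤ (2 * |x|) ^ N := pow_le_pow_left₀ (by positivity) (by linarith) N
        _ = 2 ^ N * |x| ^ N := mul_pow 2 |x| N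
    calc (1 + |x|) ^ N * ‖h x‖ ≤ 2 ^ N * |x| ^ N * ‖h x‖ :=
          mul_le_mul this le_rfl (norm_nonneg _) (by positivity)
      _ = 2 ^ N * (|x| ^ N * ‖h x‖) := by ring
      _ ≤ 2 ^ N * CN := by
          exact mul_le_mul le_rfl (hCN' x) (by positivity) (by positivity)
      _ ≤ 2 ^ N * (C0 + CN) := by
          exact mul_le_mul_of_nonneg_left (by linarith) (by positivity)

lemma vlad_majorant_integrable (D : ℝ) : Integrable (fun x : ℝ => D / (1 + x ^ 2)) := by
  simpa [div_eq_mul_inv] using (integrable_inv_one_add_sq).const_mul D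



set_option maxHeartbeats 1000000 in
theorem vladimirov_holomorphic_parameter
    (U : Set ℂ) (hU : IsOpen U) (g : ℂ × ℂ → ℂ)
    (hg : DifferentiableOn ℂ g (U ×ˢ {z : ℂ | 0 < z.im}))
    (C A B : ℝ) (hC : 0 < C) (hA : 0 ≤ A) (hB : 0 ≤ B)
    (hbound : ∀ w ∈ U, ∀ x : ℝ, ∀ y ∈ Set.Ioc (0:ℝ) 1,
      ‖g (w, (x : ℂ) + (y : ℂ) * Complex.I)‖ ≤ C * (1 + |x|) ^ B * y ^ (-A)) :
    ∀ f : SchwartzMap ℝ ℂ, ∃ h : ℂ → ℂ, DifferentiableOn ℂ h U ∧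
      ∀ w ∈ U,
        Tendsto (fun ε : ℝ => ∫ x : ℝ, g (w, (x : ℂ) + (ε : ℂ) * Complex.I) * f x)
          (nhdsWithin 0 (Set.Ioi 0)) (nhds (h w)) := by
  intro f
  have hHopen : IsOpen {z : ℂ | 0 < z.im} := isOpen_lt continuous_const Complex.continuous_im
  have hopen : IsOpen (U ×ˢ {z : ℂ | 0 < z.im}) := hU.prod hHopen
  have him : ∀ (x ε : ℝ), ((x:ℂ) + (ε:ℂ) * Complex.I).im = ε := by intro x ε; simp
  have hmem : ∀ w ∈ U, ∀ z : ℂ, 0 < z.im → DifferentiableAt ℂ g (w, z) := fun w hw z hz =>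
    hg.differentiableAt (hopen.mem_nhds ⟨hw, hz⟩)
  have hdiff2 : ∀ w ∈ U, ∀ z : ℂ, 0 < z.im → DifferentiableAt ℂ (fun ζ => g (w, ζ)) z := by
    intro w hw z hz
    exact (hmem w hw z hz).comp z ((differentiableAt_const w).prodMk differentiableAt_id)
  have hdiff1 : ∀ z : ℂ, 0 < z.im → ∀ w ∈ U, DifferentiableAt ℂ (fun ω => g (ω, z)) w := by
    intro z hz w hw
    exact (hmem w hw z hz).comp w (differentiableAt_id.prodMk (differentiableAt_const z))
  -- continuity of x ↦ g (w, x + εI)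
  have hcont_g : ∀ w ∈ U, ∀ ε : ℝ, 0 < ε →
      Continuous fun x : ℝ => g (w, (x:ℂ) + (ε:ℂ) * Complex.I) := by
    intro w hw ε hε
    rw [continuous_iff_continuousAt]
    intro x
    have h1 : ContinuousAt (fun ζ : ℂ => g (w, ζ)) ((x:ℂ) + (ε:ℂ) * Complex.I) :=
      (hdiff2 w hw _ (by rw [him]; exact hε)).continuousAt
    have h2 : Continuous fun y : ℝ => (y:ℂ) + (ε:ℂ) * Complex.I :=
      Complex.continuous_ofReal.add continuous_const
    exact ContinuousAt.comp (g := fun ζ : ℂ => g (w, ζ))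
      (f := fun y : ℝ => (y:ℂ) + (ε:ℂ) * Complex.I) h1 h2.continuousAt
  -- the z-derivative in the second variable
  set g2 : ℂ → ℂ → ℂ := fun w z => deriv (fun ζ => g (w, ζ)) z with hg2
  have hg2at : ∀ w ∈ U, ∀ z : ℂ, 0 < z.im →
      HasDerivAt (fun ζ => g (w, ζ)) (g2 w z) z := fun w hw z hz =>
    (hdiff2 w hw z hz).hasDerivAt
  -- continuity of x ↦ g2 w (x + εI)
  have hg2cont : ∀ w ∈ U, ∀ ε : ℝ, 0 < ε →
      Continuous fun x : ℝ => g2 w ((x:ℂ) + (ε:ℂ) * Complex.I) := by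
    intro w hw ε hε
    have hd : DifferentiableOn ℂ (fun ζ => g (w, ζ)) {z : ℂ | 0 < z.im} := fun z hz =>
      (hdiff2 w hw z hz).differentiableWithinAt
    have han : AnalyticOnNhd ℂ (fun ζ => g (w, ζ)) {z : ℂ | 0 < z.im} :=
      hd.analyticOnNhd hHopen
    have hcd : ContinuousOn (g2 w) {z : ℂ | 0 < z.im} := han.deriv.continuousOn
    rw [continuous_iff_continuousAt]
    intro x
    have h1 : ContinuousAt (g2 w) ((x:ℂ) + (ε:ℂ) * Complex.I) :=
      hcd.continuousAt (hHopen.mem_nhds (by simp only [Set.mem_setOf_eq, him]; exact hε))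
    have h2 : Continuous fun y : ℝ => (y:ℂ) + (ε:ℂ) * Complex.I :=
      Complex.continuous_ofReal.add continuous_const
    exact ContinuousAt.comp (g := g2 w)
      (f := fun y : ℝ => (y:ℂ) + (ε:ℂ) * Complex.I) h1 h2.continuousAt
  -- Cauchy estimate for g2
  have hg2bound : ∀ w ∈ U, ∀ x : ℝ, ∀ ε : ℝ, 0 < ε → ε ≤ 2/3 →
      ‖g2 w ((x:ℂ) + (ε:ℂ) * Complex.I)‖
        ≤ (C * (3/2) ^ B * 2 ^ A * 2) / ε * (1 + |x|) ^ B * ε ^ (-A) := by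
    intro w hw x ε hε hε23
    have hR : (0:ℝ) < ε/2 := by linarith
    set c : ℂ := (x:ℂ) + (ε:ℂ) * Complex.I with hc
    have hcim : c.im = ε := him x ε
    have hcre : c.re = x := by rw [hc]; simp
    have hball : Metric.closedBall c (ε/2) ⊆ {z : ℂ | 0 < z.im} := by
      intro ζ hζ
      rw [Metric.mem_closedBall, Complex.dist_eq] at hζ
      have h1 : |ζ.im - ε| ≤ ε/2 := by
        have := Complex.abs_im_le_norm (ζ - c)
        rw [Complex.sub_im, hcim] at this
        exact le_trans this hζ
      have := abs_le.1 h1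
      simp only [Set.mem_setOf_eq]
      linarith [this.1]
    have hd : DiffContOnCl ℂ (fun ζ => g (w, ζ)) (Metric.ball c (ε/2)) := by
      have hdo : DifferentiableOn ℂ (fun ζ => g (w, ζ)) (Metric.closedBall c (ε/2)) :=
        fun ζ hζ => (hdiff2 w hw ζ (hball hζ)).differentiableWithinAt
      apply DifferentiableOn.diffContOnCl
      rwa [closure_ball c (ne_of_gt hR)]
    have hsph : ∀ ζ ∈ Metric.sphere c (ε/2), ‖g (w, ζ)‖
        ≤ C * (3/2) ^ B * 2 ^ A * ((1 + |x|) ^ B * ε ^ (-A)) := by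
      intro ζ hζ
      rw [Metric.mem_sphere, Complex.dist_eq] at hζ
      have him2 : |ζ.im - ε| ≤ ε/2 := by
        have := Complex.abs_im_le_norm (ζ - c)
        rw [Complex.sub_im, hcim] at this
        rw [hζ] at this
        exact this
      have hre2 : |ζ.re - x| ≤ ε/2 := by
        have := Complex.abs_re_le_norm (ζ - c)
        rw [Complex.sub_re, hcre] at this
        rw [hζ] at this
        exact this
      obtain ⟨him2a, him2b⟩ := abs_le.1 him2
      obtain ⟨hre2a, hre2b⟩ := abs_le.1 hre2
      have h1 : ε/2 ≤ ζ.im := by linarith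
      have h2 : ζ.im ≤ 1 := by linarith
      have hg1 := hbound w hw ζ.re ζ.im ⟨lt_of_lt_of_le hR h1, h2⟩
      rw [Complex.re_add_im ζ] at hg1
      have hreabs : |ζ.re| ≤ |x| + ε/2 := by
        have : ζ.re = x + (ζ.re - x) := by ring
        rw [this]
        exact le_trans (abs_add_le _ _) (by gcongr)
      have h3 : (1 + |ζ.re|) ^ B ≤ (3/2) ^ B * (1 + |x|) ^ B := by
        rw [← Real.mul_rpow (by norm_num) (by positivity)]
        refine Real.rpow_le_rpow (by positivity) ?_ hB
        have := abs_nonneg x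
        nlinarith
      have h4 : ζ.im ^ (-A) ≤ 2 ^ A * ε ^ (-A) := by
        have h5 : ζ.im ^ (-A) ≤ (ε/2) ^ (-A) := vlad_rpow_anti hR h1 (by linarith)
        have h6 : ((2:ℝ)⁻¹) ^ (-A) = 2 ^ A := by
          rw [Real.inv_rpow (by norm_num), Real.rpow_neg (by norm_num), inv_inv]
        have h7 : (ε/2) ^ (-A) = 2 ^ A * ε ^ (-A) := by
          rw [div_eq_mul_inv, Real.mul_rpow hε.le (by positivity), h6]
          ring
        rw [← h7]; exact h5
      calc ‖g (w, ζ)‖ ≤ C * (1 + |ζ.re|) ^ B * ζ.im ^ (-A) := hg1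
        _ ≤ (C * ((3/2) ^ B * (1 + |x|) ^ B)) * (2 ^ A * ε ^ (-A)) := by
            refine mul_le_mul ?_ h4 (Real.rpow_nonneg (by linarith) _) (by positivity)
            exact mul_le_mul_of_nonneg_left h3 hC.le
        _ = C * (3/2) ^ B * 2 ^ A * ((1 + |x|) ^ B * ε ^ (-A)) := by ring
    have hest := Complex.norm_deriv_le_of_forall_mem_sphere_norm_le hR hd hsph
    refine le_trans hest (le_of_eq ?_)
    field_simp
  -- Schwartz iterated derivatives
  set ff : ℕ → SchwartzMap ℝ ℂ := fun k => (SchwartzMap.derivCLM ℂ ℂ)^[k] f with hff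
  have hffderiv : ∀ (k : ℕ) (x : ℝ), HasDerivAt (ff k) (ff (k+1) x) x := by
    intro k x
    have h1 : HasDerivAt (ff k) (deriv (ff k) x) x :=
      ((ff k).differentiable x).hasDerivAt
    have h2 : ff (k+1) x = deriv (ff k) x := by
      simp only [hff]
      rw [Function.iterate_succ_apply']
      exact SchwartzMap.derivCLM_apply ℂ ((SchwartzMap.derivCLM ℂ ℂ)^[k] f) x
    rw [h2]; exact h1
  -- Schwartz decay bounds
  have hDk : ∀ k : ℕ, ∃ D : ℝ, 0 ≤ D ∧ ∀ x : ℝ,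
      (1 + |x|) ^ B * ‖ff k x‖ ≤ D / (1 + x ^ 2) := fun k => vlad_schwartz_bound (ff k) B hB
  choose D hD0 hDle using hDk
  -- pointwise bound for the integrand
  have hgbound : ∀ w ∈ U, ∀ ε ∈ Set.Ioc (0:ℝ) 1, ∀ (k : ℕ) (x : ℝ),
      ‖g (w, (x:ℂ) + (ε:ℂ) * Complex.I) * ff k x‖
        ≤ C * ε ^ (-A) * D k / (1 + x ^ 2) := by
    intro w hw ε hε k x
    rw [norm_mul]
    calc ‖g (w, (x:ℂ) + (ε:ℂ) * Complex.I)‖ * ‖ff k x‖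
        ≤ (C * (1 + |x|) ^ B * ε ^ (-A)) * ‖ff k x‖ :=
          mul_le_mul_of_nonneg_right (hbound w hw x ε hε) (norm_nonneg _)
      _ = C * ε ^ (-A) * ((1 + |x|) ^ B * ‖ff k x‖) := by ring
      _ ≤ C * ε ^ (-A) * (D k / (1 + x ^ 2)) := by
          exact mul_le_mul_of_nonneg_left (hDle k x)
            (mul_nonneg hC.le (Real.rpow_nonneg hε.1.le _))
      _ = C * ε ^ (-A) * D k / (1 + x ^ 2) := by ring
  -- integrability of the integrand
  have hint : ∀ w ∈ U, ∀ ε ∈ Set.Ioc (0:ℝ) 1, ∀ k : ℕ,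
      Integrable (fun x : ℝ => g (w, (x:ℂ) + (ε:ℂ) * Complex.I) * ff k x) := by
    intro w hw ε hε k
    refine (vlad_majorant_integrable (C * ε ^ (-A) * D k)).mono' ?_ ?_
    · exact ((hcont_g w hw ε hε.1).mul (ff k).continuous).aestronglyMeasurable
    · exact Eventually.of_forall fun x => hgbound w hw ε hε k x
  -- the family of pairings
  set Φ : ℕ → ℂ → ℝ → ℂ :=
    fun k w ε => ∫ x : ℝ, g (w, (x:ℂ) + (ε:ℂ) * Complex.I) * ff k x with hΦ
  set K : ℝ := ∫ x : ℝ, (1 + x ^ 2)⁻¹ with hK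
  have hK0 : 0 ≤ K := integral_nonneg fun x => by positivity
  have hΦbound : ∀ w ∈ U, ∀ ε ∈ Set.Ioc (0:ℝ) 1, ∀ k : ℕ,
      ‖Φ k w ε‖ ≤ C * D k * K * ε ^ (-A) := by
    intro w hw ε hε k
    have h1 : ‖Φ k w ε‖ ≤ ∫ x : ℝ, C * ε ^ (-A) * D k / (1 + x ^ 2) :=
      norm_integral_le_of_norm_le (vlad_majorant_integrable (C * ε ^ (-A) * D k))
        (Eventually.of_forall fun x => hgbound w hw ε hε k x)
    have h2 : (∫ x : ℝ, C * ε ^ (-A) * D k / (1 + x ^ 2)) = C * D k * K * ε ^ (-A) := by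
      simp_rw [div_eq_mul_inv]
      rw [integral_const_mul, hK]
      ring
    rw [h2] at h1; exact h1
  -- derivative of Φ in ε, with integration by parts
  have hΦderiv : ∀ w ∈ U, ∀ k : ℕ, ∀ ε₀ ∈ Set.Ioc (0:ℝ) (1/2 : ℝ),
      HasDerivAt (Φ k w) (-Complex.I * Φ (k+1) w ε₀) ε₀ := by
    intro w hw k ε₀ hε₀
    -- integrability of the g2-integrand
    have hg2int : ∀ ε : ℝ, 0 < ε → ε ≤ 2/3 →
        Integrable (fun x : ℝ => g2 w ((x:ℂ) + (ε:ℂ) * Complex.I) * ff k x) := by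
      intro ε hε hε23
      refine (vlad_majorant_integrable
          (C * (3/2) ^ B * 2 ^ A * 2 / ε * ε ^ (-A) * D k)).mono'
        (((hg2cont w hw ε hε).mul (ff k).continuous).aestronglyMeasurable) ?_
      refine Eventually.of_forall fun x => ?_
      rw [norm_mul]
      have hnn : (0:ℝ) ≤ C * (3/2) ^ B * 2 ^ A * 2 / ε * ε ^ (-A) :=
        mul_nonneg (div_nonneg (by positivity) hε.le) (Real.rpow_nonneg hε.le _)
      calc ‖g2 w ((x:ℂ) + (ε:ℂ) * Complex.I)‖ * ‖ff k x‖
          ≤ (C * (3/2) ^ B * 2 ^ A * 2 / ε * (1 + |x|) ^ B * ε ^ (-A)) * ‖ff k x‖ :=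
            mul_le_mul_of_nonneg_right (hg2bound w hw x ε hε hε23) (norm_nonneg _)
        _ = (C * (3/2) ^ B * 2 ^ A * 2 / ε * ε ^ (-A)) * ((1 + |x|) ^ B * ‖ff k x‖) := by
            ring
        _ ≤ (C * (3/2) ^ B * 2 ^ A * 2 / ε * ε ^ (-A)) * (D k / (1 + x ^ 2)) :=
            mul_le_mul_of_nonneg_left (hDle k x) hnn
        _ = C * (3/2) ^ B * 2 ^ A * 2 / ε * ε ^ (-A) * D k / (1 + x ^ 2) := by ring
    -- differentiation under the integral sign
    have hder := hasDerivAt_integral_of_dominated_loc_of_deriv_le (μ := volume)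
      (F := fun (ε : ℝ) (x : ℝ) => g (w, (x:ℂ) + (ε:ℂ) * Complex.I) * ff k x)
      (F' := fun (ε : ℝ) (x : ℝ) => Complex.I * g2 w ((x:ℂ) + (ε:ℂ) * Complex.I) * ff k x)
      (x₀ := ε₀)
      (bound := fun x =>
        C * (3/2) ^ B * 2 ^ A * 2 / (3*ε₀/4) * (3*ε₀/4) ^ (-A) * D k / (1 + x ^ 2))
      (s := Metric.ball ε₀ (ε₀/4)) (Metric.ball_mem_nhds _ (by linarith [hε₀.1]))
      (by
        filter_upwards [Ioo_mem_nhds (by linarith [hε₀.1] : ε₀/2 < ε₀)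
          (by linarith [hε₀.2] : ε₀ < 1)] with ε hε
        exact ((hcont_g w hw ε (by linarith [hε₀.1, hε.1])).mul
          (ff k).continuous).aestronglyMeasurable)
      (hint w hw ε₀ ⟨hε₀.1, by linarith [hε₀.2]⟩ k)
      (((continuous_const.mul (hg2cont w hw ε₀ hε₀.1)).mul
        (ff k).continuous).aestronglyMeasurable)
      (by
        refine Eventually.of_forall fun x => fun ε hεb => ?_
        rw [Metric.mem_ball, Real.dist_eq] at hεb
        obtain ⟨hb1, hb2⟩ := abs_lt.1 hεb
        have hεpos : 0 < ε := by linarith [hε₀.1]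
        have hε34 : 3*ε₀/4 ≤ ε := by linarith
        have hε23 : ε ≤ 2/3 := by linarith [hε₀.2]
        rw [norm_mul, norm_mul, Complex.norm_I, one_mul]
        have h34pos : (0:ℝ) < 3*ε₀/4 := by linarith [hε₀.1]
        calc ‖g2 w ((x:ℂ) + (ε:ℂ) * Complex.I)‖ * ‖ff k x‖
            ≤ (C * (3/2) ^ B * 2 ^ A * 2 / ε * (1 + |x|) ^ B * ε ^ (-A)) * ‖ff k x‖ :=
              mul_le_mul_of_nonneg_right (hg2bound w hw x ε hεpos hε23) (norm_nonneg _)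
          _ ≤ (C * (3/2) ^ B * 2 ^ A * 2 / (3*ε₀/4) * (1 + |x|) ^ B * (3*ε₀/4) ^ (-A))
                * ‖ff k x‖ := by
              refine mul_le_mul_of_nonneg_right ?_ (norm_nonneg _)
              have hd1 : C * (3/2) ^ B * 2 ^ A * 2 / ε
                  ≤ C * (3/2) ^ B * 2 ^ A * 2 / (3*ε₀/4) :=
                div_le_div_of_nonneg_left (by positivity) h34pos hε34
              have hd2 : ε ^ (-A) ≤ (3*ε₀/4) ^ (-A) :=
                vlad_rpow_anti h34pos hε34 (by linarith)
              have hrp : (0:ℝ) ≤ (1 + |x|) ^ B := Real.rpow_nonneg (by positivity) _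
              have h0ε : (0:ℝ) ≤ ε ^ (-A) := Real.rpow_nonneg hεpos.le _
              calc C * (3/2) ^ B * 2 ^ A * 2 / ε * (1 + |x|) ^ B * ε ^ (-A)
                  ≤ C * (3/2) ^ B * 2 ^ A * 2 / (3*ε₀/4) * (1 + |x|) ^ B * ε ^ (-A) := by
                    exact mul_le_mul_of_nonneg_right
                      (mul_le_mul_of_nonneg_right hd1 hrp) h0ε
                _ ≤ C * (3/2) ^ B * 2 ^ A * 2 / (3*ε₀/4) * (1 + |x|) ^ B * (3*ε₀/4) ^ (-A) := by
                    refine mul_le_mul_of_nonneg_left hd2 ?_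
                    positivity
          _ = (C * (3/2) ^ B * 2 ^ A * 2 / (3*ε₀/4) * (3*ε₀/4) ^ (-A))
                * ((1 + |x|) ^ B * ‖ff k x‖) := by ring
          _ ≤ (C * (3/2) ^ B * 2 ^ A * 2 / (3*ε₀/4) * (3*ε₀/4) ^ (-A)) * (D k / (1 + x ^ 2)) := by
              refine mul_le_mul_of_nonneg_left (hDle k x) ?_
              positivity
          _ = C * (3/2) ^ B * 2 ^ A * 2 / (3*ε₀/4) * (3*ε₀/4) ^ (-A) * D k / (1 + x ^ 2) := by
              ring)
      (vlad_majorant_integrable _)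
      (by
        refine Eventually.of_forall fun x => fun ε hεb => ?_
        rw [Metric.mem_ball, Real.dist_eq] at hεb
        obtain ⟨hb1, hb2⟩ := abs_lt.1 hεb
        have hεpos : 0 < ε := by linarith [hε₀.1]
        have hz : HasDerivAt (fun ζ : ℂ => g (w, ζ))
            (g2 w ((x:ℂ) + (ε:ℂ) * Complex.I)) ((x:ℂ) + (ε:ℂ) * Complex.I) :=
          hg2at w hw _ (by rw [him]; exact hεpos)
        have hu2 : HasDerivAt (fun ε : ℝ => (x:ℂ) + (ε:ℂ) * Complex.I) Complex.I ε := by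
          have h3 : HasDerivAt (fun s : ℝ => ((s:ℝ):ℂ)) 1 ε := by
            exact Complex.ofRealCLM.hasDerivAt (x := ε)
          simpa using (h3.mul_const Complex.I).const_add ((x:ℂ))
        have hcomp := vlad_comp_affine hz hu2 rfl
        have hmul := hcomp.mul_const (ff k x)
        simpa [mul_assoc] using hmul)
    -- integration by parts in x
    have hub : ∀ x : ℝ, HasDerivAt (fun x : ℝ => g (w, (x:ℂ) + (ε₀:ℂ) * Complex.I))
        (g2 w ((x:ℂ) + (ε₀:ℂ) * Complex.I)) x := by
      intro x
      have hz := hg2at w hw ((x:ℂ) + (ε₀:ℂ) * Complex.I) (by rw [him]; exact hε₀.1)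
      have hu2 : HasDerivAt (fun x : ℝ => (x:ℂ) + (ε₀:ℂ) * Complex.I) 1 x := by
        have h3 : HasDerivAt (fun s : ℝ => ((s:ℝ):ℂ)) 1 x := by
          exact Complex.ofRealCLM.hasDerivAt (x := x)
        simpa using h3.add_const ((ε₀:ℂ) * Complex.I)
      simpa using vlad_comp_affine hz hu2 rfl
    have hibp : (∫ x : ℝ, g2 w ((x:ℂ) + (ε₀:ℂ) * Complex.I) * ff k x)
        = - ∫ x : ℝ, g (w, (x:ℂ) + (ε₀:ℂ) * Complex.I) * ff (k+1) x := by
      have h5 := MeasureTheory.integral_mul_deriv_eq_deriv_mul_of_integrable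
        (u := fun x : ℝ => g (w, (x:ℂ) + (ε₀:ℂ) * Complex.I)) (v := fun x => ff k x)
        (u' := fun x : ℝ => g2 w ((x:ℂ) + (ε₀:ℂ) * Complex.I)) (v' := fun x => ff (k+1) x)
        (fun x _ => hub x) (fun x _ => hffderiv k x)
        (hint w hw ε₀ ⟨hε₀.1, by linarith [hε₀.2]⟩ (k+1))
        (hg2int ε₀ hε₀.1 (by linarith [hε₀.2]))
        (hint w hw ε₀ ⟨hε₀.1, by linarith [hε₀.2]⟩ k)
      -- h5 : ∫ u * v' = - ∫ u' * v
      have h6 : (∫ x : ℝ, g (w, (x:ℂ) + (ε₀:ℂ) * Complex.I) * ff (k+1) x)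
          = - ∫ x : ℝ, g2 w ((x:ℂ) + (ε₀:ℂ) * Complex.I) * ff k x := h5
      rw [h6]; ring
    have h9 : (∫ x : ℝ, Complex.I * g2 w ((x:ℂ) + (ε₀:ℂ) * Complex.I) * ff k x)
        = -Complex.I * Φ (k+1) w ε₀ := by
      simp_rw [mul_assoc]
      rw [integral_const_mul, hibp, hΦ]
      ring
    have h10 := hder.2
    rw [h9] at h10
    exact h10
  -- holomorphy of Φ 0 in w for fixed ε
  have hΦw : ∀ ε ∈ Set.Ioc (0:ℝ) (1/2 : ℝ), DifferentiableOn ℂ (fun w => Φ 0 w ε) U := by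
    intro ε hε w₀ hw₀
    obtain ⟨r, hr0, hrU⟩ : ∃ r > 0, Metric.closedBall w₀ r ⊆ U :=
      Metric.nhds_basis_closedBall.mem_iff.1 (hU.mem_nhds hw₀)
    have hε1 : ε ∈ Set.Ioc (0:ℝ) 1 := ⟨hε.1, hε.2.trans (by norm_num)⟩
    have himx : ∀ x : ℝ, (0:ℝ) < ((x:ℂ) + (ε:ℂ) * Complex.I).im := by
      intro x; rw [him]; exact hε.1
    have hwat : ∀ x : ℝ, ∀ w ∈ U, HasDerivAt (fun ω => g (ω, (x:ℂ) + (ε:ℂ) * Complex.I))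
        (deriv (fun ω => g (ω, (x:ℂ) + (ε:ℂ) * Complex.I)) w) w := fun x w hw =>
      (hdiff1 _ (himx x) w hw).hasDerivAt
    -- Cauchy estimate in the w-direction
    have hwbound : ∀ x : ℝ, ∀ w ∈ Metric.ball w₀ (r/2),
        ‖deriv (fun ω => g (ω, (x:ℂ) + (ε:ℂ) * Complex.I)) w‖
          ≤ C * (1 + |x|) ^ B * ε ^ (-A) / (r/2) := by
      intro x w hwball
      rw [Metric.mem_ball] at hwball
      have hsub : Metric.closedBall w (r/2) ⊆ U := by
        refine le_trans (Metric.closedBall_subset_closedBall' ?_) hrU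
        linarith
      refine Complex.norm_deriv_le_of_forall_mem_sphere_norm_le (by linarith) ?_ ?_
      · apply DifferentiableOn.diffContOnCl
        rw [closure_ball w (by positivity : (r:ℝ)/2 ≠ 0)]
        exact fun ω hω => (hdiff1 _ (himx x) ω (hsub hω)).differentiableWithinAt
      · intro ω hω
        exact hbound ω (hsub (Metric.sphere_subset_closedBall hω)) x ε hε1
    -- measurability of the derivative via slopes
    have hmeas' : AEStronglyMeasurable
        (fun x : ℝ => deriv (fun ω => g (ω, (x:ℂ) + (ε:ℂ) * Complex.I)) w₀ * ff 0 x)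
        volume := by
      refine AEStronglyMeasurable.mul ?_ (ff 0).continuous.aestronglyMeasurable
      have hcm0 : Tendsto (fun m : ℕ => r / ((m:ℝ) + 2)) atTop (nhds 0) := by
        have h1 : Tendsto (fun m : ℕ => (m:ℝ) + 2) atTop atTop :=
          tendsto_atTop_add_const_right atTop 2 tendsto_natCast_atTop_atTop
        simpa [div_eq_mul_inv] using h1.inv_tendsto_atTop.const_mul r
      have hseq : ∀ m : ℕ, AEStronglyMeasurable
          (fun x : ℝ => (g (w₀ + ((r/((m:ℝ)+2) : ℝ) : ℂ), (x:ℂ) + (ε:ℂ) * Complex.I)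
            - g (w₀, (x:ℂ) + (ε:ℂ) * Complex.I)) / ((r/((m:ℝ)+2) : ℝ) : ℂ)) volume := by
        intro m
        have hwm : (w₀ + ((r/((m:ℝ)+2) : ℝ) : ℂ)) ∈ U := by
          apply hrU
          rw [Metric.mem_closedBall, Complex.dist_eq, add_sub_cancel_left]
          rw [Complex.norm_real, Real.norm_eq_abs, abs_of_nonneg (by positivity)]
          rw [div_le_iff₀ (by positivity)]
          nlinarith [Nat.cast_nonneg (α := ℝ) m]
        exact (((hcont_g _ hwm ε hε.1).sub (hcont_g w₀ hw₀ ε hε.1)).div_const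
          _).aestronglyMeasurable
      refine aestronglyMeasurable_of_tendsto_ae atTop hseq ?_
      refine Eventually.of_forall fun x => ?_
      have hslope := hasDerivAt_iff_tendsto_slope.1 (hwat x w₀ hw₀)
      have hne : ∀ m : ℕ, ((r/((m:ℝ)+2) : ℝ) : ℂ) ≠ 0 := by
        intro m
        simp only [ne_eq, Complex.ofReal_eq_zero]
        positivity
      have hcm : Tendsto (fun m : ℕ => w₀ + ((r/((m:ℝ)+2) : ℝ) : ℂ)) atTop
          (nhdsWithin w₀ {w₀}ᶜ) := by
        rw [tendsto_nhdsWithin_iff]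
        constructor
        · have h2 : Tendsto (fun m : ℕ => ((r/((m:ℝ)+2) : ℝ) : ℂ)) atTop (nhds 0) := by
            have h3 := (Complex.continuous_ofReal.tendsto 0).comp hcm0
            simp only [Complex.ofReal_zero] at h3
            exact h3
          simpa using tendsto_const_nhds.add h2
        · refine Eventually.of_forall fun m => ?_
          simp only [Set.mem_compl_iff, Set.mem_singleton_iff]
          intro hbad
          refine hne m ?_
          have h4 := congrArg (fun z => z - w₀) hbad
          simpa using h4
      have hcomp := hslope.comp hcm
      refine hcomp.congr fun m => ?_
      rw [Function.comp_apply, slope_def_field, add_sub_cancel_left]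
    -- differentiation under the integral sign in w
    have hder := hasDerivAt_integral_of_dominated_loc_of_deriv_le (μ := volume)
      (F := fun (w : ℂ) (x : ℝ) => g (w, (x:ℂ) + (ε:ℂ) * Complex.I) * ff 0 x)
      (F' := fun (w : ℂ) (x : ℝ) =>
        deriv (fun ω => g (ω, (x:ℂ) + (ε:ℂ) * Complex.I)) w * ff 0 x)
      (x₀ := w₀)
      (bound := fun x => (C * ε ^ (-A) * D 0 / (r/2)) / (1 + x ^ 2))
      (s := Metric.ball w₀ (r/2)) (Metric.ball_mem_nhds _ (by linarith))
      (by
        filter_upwards [hU.mem_nhds hw₀] with w hw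
        exact ((hcont_g w hw ε hε.1).mul (ff 0).continuous).aestronglyMeasurable)
      (hint w₀ hw₀ ε hε1 0)
      hmeas'
      (by
        refine Eventually.of_forall fun x => fun w hwball => ?_
        rw [norm_mul]
        have hnn : (0:ℝ) ≤ C * ε ^ (-A) / (r/2) :=
          div_nonneg (mul_nonneg hC.le (Real.rpow_nonneg hε.1.le _)) (by linarith)
        calc ‖deriv (fun ω => g (ω, (x:ℂ) + (ε:ℂ) * Complex.I)) w‖ * ‖ff 0 x‖
            ≤ (C * (1 + |x|) ^ B * ε ^ (-A) / (r/2)) * ‖ff 0 x‖ :=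
              mul_le_mul_of_nonneg_right (hwbound x w hwball) (norm_nonneg _)
          _ = (C * ε ^ (-A) / (r/2)) * ((1 + |x|) ^ B * ‖ff 0 x‖) := by ring
          _ ≤ (C * ε ^ (-A) / (r/2)) * (D 0 / (1 + x ^ 2)) :=
              mul_le_mul_of_nonneg_left (hDle 0 x) hnn
          _ = (C * ε ^ (-A) * D 0 / (r/2)) / (1 + x ^ 2) := by ring)
      (vlad_majorant_integrable _)
      (by
        refine Eventually.of_forall fun x => fun w hwball => ?_
        have hwU : w ∈ U := by
          apply hrU
          rw [Metric.mem_ball] at hwball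
          rw [Metric.mem_closedBall]
          linarith [le_of_lt hwball]
        exact (hwat x w hwU).mul_const (ff 0 x))
    exact hder.2.differentiableAt.differentiableWithinAt
  -- apply the one-dimensional lemma
  set n : ℕ := ⌊A⌋₊ + 1 with hn
  set α : ℝ := (n : ℝ) + 1/2 with hα
  have hAn : A < n := by
    rw [hn]; push_cast; exact Nat.lt_floor_add_one A
  set M : ℝ := 2 ^ A * ∑ k ∈ Finset.range (n+2), C * D k * K with hM
  have hM0 : 0 ≤ M := by
    rw [hM]
    refine mul_nonneg (by positivity) (Finset.sum_nonneg fun k _ => ?_)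
    have := hD0 k
    positivity
  have h2A1 : (1:ℝ) ≤ 2 ^ A := Real.one_le_rpow (by norm_num) hA
  have hterm : ∀ k ∈ Finset.range (n+2), C * D k * K ≤ ∑ j ∈ Finset.range (n+2), C * D j * K := by
    intro k hk
    exact Finset.single_le_sum (f := fun j => C * D j * K)
      (fun j _ => by have := hD0 j; positivity) hk
  obtain ⟨L, ψ, hψ, hL⟩ := vlad_oned n α (1/2) M
    (by rw [hα]; linarith) (by rw [hα]; linarith) (by norm_num) (by norm_num) hM0 Φ U
    (fun w hw k ε hε => hΦderiv w hw k ε hε)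
    (by
      intro w hw k hk
      have h1 := hΦbound w hw (1/2) (by norm_num) k
      have h2 : ((1:ℝ)/2) ^ (-A) = 2 ^ A := by
        rw [one_div, Real.inv_rpow (by norm_num), Real.rpow_neg (by norm_num), inv_inv]
      rw [h2] at h1
      refine h1.trans ?_
      rw [hM]
      calc C * D k * K * 2 ^ A ≤ (∑ j ∈ Finset.range (n+2), C * D j * K) * 2 ^ A := by
            refine mul_le_mul_of_nonneg_right (hterm k ?_) (by positivity)
            simp only [Finset.mem_range]
            omega
        _ = 2 ^ A * ∑ j ∈ Finset.range (n+2), C * D j * K := by ring)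
    (by
      intro w hw ε hε
      have h1 := hΦbound w hw ε ⟨hε.1, hε.2.trans (by norm_num)⟩ (n+1)
      refine h1.trans ?_
      have h2 : ε ^ (-A) ≤ ε ^ (-α) :=
        Real.rpow_le_rpow_of_exponent_ge hε.1 (hε.2.trans (by norm_num)) (by rw [hα]; linarith)
      calc C * D (n+1) * K * ε ^ (-A) ≤ M * ε ^ (-A) := by
            refine mul_le_mul_of_nonneg_right ?_ (Real.rpow_nonneg hε.1.le _)
            rw [hM]
            calc C * D (n+1) * K ≤ ∑ j ∈ Finset.range (n+2), C * D j * K :=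
                  hterm (n+1) (by simp only [Finset.mem_range]; omega)
              _ ≤ 2 ^ A * ∑ j ∈ Finset.range (n+2), C * D j * K := by
                  refine le_mul_of_one_le_left ?_ h2A1
                  exact Finset.sum_nonneg fun j _ => by have := hD0 j; positivity
        _ ≤ M * ε ^ (-α) := mul_le_mul_of_nonneg_left h2 hM0)
  refine ⟨L, ?_, ?_⟩
  · -- holomorphy of the limit
    have htu : TendstoUniformlyOn (fun ε w => Φ 0 w ε) L (nhdsWithin 0 (Set.Ioi 0)) U := by
      rw [Metric.tendstoUniformlyOn_iff]
      intro δ hδ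
      have h1 : ∀ᶠ ε in nhdsWithin (0:ℝ) (Set.Ioi 0), |ψ ε| < δ := by
        have h2 := Metric.tendsto_nhds.mp hψ δ hδ
        filter_upwards [h2] with ε hε
        rwa [Real.dist_eq, sub_zero] at hε
      filter_upwards [h1, Ioc_mem_nhdsGT (by norm_num : (0:ℝ) < 1/2)] with ε h1ε h2ε
      intro w hw
      rw [dist_comm, dist_eq_norm]
      exact lt_of_le_of_lt ((hL w hw ε h2ε).trans (le_abs_self _)) h1ε
    exact htu.tendstoLocallyUniformlyOn.differentiableOn
      (eventually_of_mem (Ioc_mem_nhdsGT (by norm_num : (0:ℝ) < 1/2))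
        fun ε hε => hΦw ε hε) hU
  · -- pointwise convergence
    intro w hw
    have hev : Set.Ioc (0:ℝ) (1/2) ∈ nhdsWithin (0:ℝ) (Set.Ioi 0) :=
      Ioc_mem_nhdsGT (by norm_num)
    have h1 : Tendsto (fun ε => Φ 0 w ε - L w) (nhdsWithin 0 (Set.Ioi 0)) (nhds 0) := by
      refine squeeze_zero_norm' ?_ hψ
      filter_upwards [hev] with ε hε
      exact hL w hw ε hε
    have h2 := tendsto_sub_nhds_zero_iff.mp h1
    exact h2
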